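/- arXiv:2212.00759 — 2 statements merged into one kernel-verified Lean document; each statement's English description precedes it below -/
import Mathlib

section
/- Let p : I^d → ℝ be a finite-rank probability density, and for 1 ≤ k ≤ d−1 let Φ_k(x_{1:k}; α_k), α_k = 1,…,r_k, be the first r_k left singular functions of the reshaped kernel p(x_{1:k}; x_{k+1:d}) of rank r_k. Then the system of core determining equations G_1(x_1;α_1) = Φ_1(x_1;α_1), Σ_{α_{k-1}} Φ_{k-1}(x_{1:k-1};α_{k-1}) G_k(α_{k-1};x_k,α_k) = Φ_k(x_{1:k-1};x_k,α_k) for 2 ≤ k ≤ d−1, and Σ_{α_{d-1}} Φ_{d-1}(x_{1:d-1};α_{d-1}) G_d(α_{d-1};x_d) = p(x_{1:d-1};x_d), has a unique solution (G_1,…,G_d), and these cores give the exact tensor-train representation p(x) = G_1(x_1,:) G_2(:,x_2,:) ⋯ G_d(:,x_d). -/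
open MeasureTheory BigOperators



lemma integrable_of_integral_ne_zero {α : Type*} [MeasurableSpace α] {μ : Measure α}
    {f : α → ℝ} (h : ∫ x, f x ∂μ ≠ 0) : Integrable f μ := by
  by_contra hi
  exact h (integral_undef hi)

lemma span_top_of_dot {n : ℕ} (s : Set (Fin n → ℝ))
    (h : ∀ d : Fin n → ℝ, (∀ g ∈ s, ∑ i, g i * d i = 0) → d = 0) :
    Submodule.span ℝ s = ⊤ := by
  classical
  let E := EuclideanSpace ℝ (Fin n)
  let eq : E ≃ₗ[ℝ] (Fin n → ℝ) := WithLp.linearEquiv 2 ℝ (Fin n → ℝ)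
  let s' : Set E := eq.symm '' s
  have hS' : Submodule.span ℝ s' = ⊤ := by
    have horth : (Submodule.span ℝ s')ᗮ = ⊥ := by
      rw [Submodule.eq_bot_iff]
      intro d hd
      have hgen : ∀ g ∈ s, ∑ i, g i * d i = 0 := by
        intro g hg
        have := (Submodule.mem_orthogonal _ d).1 hd (eq.symm g)
          (Submodule.subset_span ⟨g, hg, rfl⟩)
        simpa [PiLp.inner_apply, RCLike.inner_apply, E, eq, mul_comm] using this
      have : eq d = 0 := h (eq d) (fun g hg => hgen g hg)
      simpa [eq] using congrArg eq.symm this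
    have := congrArg (fun K : Submodule ℝ E => Kᗮ) horth
    simpa [Submodule.orthogonal_orthogonal] using this
  rw [← top_le_iff]
  intro x _
  have hx : eq.symm x ∈ Submodule.span ℝ s' := by rw [hS']; trivial
  have := Submodule.mem_map_of_mem (f := eq.toLinearMap) hx
  rw [← Submodule.span_image] at this
  have himg : eq.toLinearMap '' s' = s := by
    ext g; constructor
    · rintro ⟨g', ⟨g0, hg0, rfl⟩, rfl⟩; simpa [eq] using hg0
    · intro hg; exact ⟨eq.symm g, ⟨g, hg, rfl⟩, by simp [eq]⟩
  rw [himg] at this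
  simpa [eq] using this


noncomputable def chainM (r : ℕ → ℕ) :
    (n : ℕ) → (∀ j : Fin n, Matrix (Fin (r j)) (Fin (r (j + 1))) ℝ) →
      Matrix (Fin (r 0)) (Fin (r n)) ℝ
  | 0, _ => 1
  | n + 1, f => chainM r n (fun j => f j.castSucc) *
      (show Matrix (Fin (r n)) (Fin (r (n + 1))) ℝ from f (Fin.last n))

lemma chainM_succ (r : ℕ → ℕ) (n : ℕ)
    (f : ∀ j : Fin (n + 1), Matrix (Fin (r j)) (Fin (r (j + 1))) ℝ) :
    chainM r (n + 1) f = chainM r n (fun j => f j.castSucc) *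
      (show Matrix (Fin (r n)) (Fin (r (n + 1))) ℝ from f (Fin.last n)) := rfl

/-- the equiv peeling the last component of a dependent tuple over `Fin (n+2)` -/
def peelEquiv (r : ℕ → ℕ) (n : ℕ) :
    ((∀ k : Fin (n + 1), Fin (r k)) × Fin (r (n + 1))) ≃ (∀ k : Fin (n + 2), Fin (r k)) where
  toFun q := Fin.snoc (α := fun k : Fin (n + 2) => Fin (r k)) q.1 q.2
  invFun αp := (fun k => αp k.castSucc, αp (Fin.last (n + 1)))
  left_inv q := by
    refine Prod.ext ?_ ?_
    · funext k
      simp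
    · simp
  right_inv αp := Fin.snoc_init_self αp

lemma path_sum_w (r : ℕ → ℕ) :
    ∀ (n : ℕ) (f : ∀ j : Fin n, Matrix (Fin (r j)) (Fin (r (j + 1))) ℝ)
      (v : Fin (r n) → ℝ),
      (∑ α : ∀ k : Fin (n + 1), Fin (r k),
        (∏ j : Fin n, f j (α j.castSucc) (α j.succ)) * v (α (Fin.last n)))
      = ∑ i, ∑ m, chainM r n f i m * v m := by
  intro n
  induction n with
  | zero =>
    intro f v
    have h1 : (∑ α : ∀ k : Fin 1, Fin (r k),
        (∏ j : Fin 0, f j (α j.castSucc) (α j.succ)) * v (α (Fin.last 0)))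
        = ∑ α : ∀ k : Fin 1, Fin (r k), v (α (Fin.last 0)) := by
      apply Finset.sum_congr rfl; intro α _; simp
    have hbij : Function.Bijective (fun α : ∀ k : Fin 1, Fin (r k) => α (Fin.last 0)) := by
      constructor
      · intro α α' h
        funext k
        have hk : k = Fin.last 0 := Subsingleton.elim _ _
        rw [hk]; exact h
      · intro i
        refine ⟨fun k => Fin.cast (congrArg r (by omega : ((Fin.last 0 : Fin 1) : ℕ) = (k : ℕ))) i,
          rfl⟩
    rw [h1, Fintype.sum_bijective _ hbij _ (fun i => v i) (fun _ => rfl)]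
    simp [chainM, Matrix.one_apply]
  | succ n ih =>
    intro f v
    rw [← Equiv.sum_comp (peelEquiv r n) (fun α => (∏ j : Fin (n + 1),
        f j (α j.castSucc) (α j.succ)) * v (α (Fin.last (n + 1))))]
    rw [Fintype.sum_prod_type]
    have key : ∀ (α' : ∀ k : Fin (n + 1), Fin (r k)) (c : Fin (r (n + 1))),
        (fun α => (∏ j : Fin (n + 1), f j (α j.castSucc) (α j.succ))
          * v (α (Fin.last (n + 1)))) (peelEquiv r n (α', c))
        = (∏ j : Fin n, f j.castSucc (α' j.castSucc) (α' j.succ))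
            * (f (Fin.last n) (α' (Fin.last n)) c * v c) := by
      intro α' c
      show (∏ j : Fin (n + 1),
          f j ((Fin.snoc (α := fun k : Fin (n + 2) => Fin (r k)) α' c) j.castSucc)
            ((Fin.snoc (α := fun k : Fin (n + 2) => Fin (r k)) α' c) j.succ))
          * v ((Fin.snoc (α := fun k : Fin (n + 2) => Fin (r k)) α' c) (Fin.last (n + 1))) = _
      rw [Fin.snoc_last, Fin.prod_univ_castSucc]
      have h2 : ∀ j : Fin n,
          f j.castSucc
            ((Fin.snoc (α := fun k : Fin (n + 2) => Fin (r k)) α' c) j.castSucc.castSucc)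
            ((Fin.snoc (α := fun k : Fin (n + 2) => Fin (r k)) α' c) j.castSucc.succ)
          = f j.castSucc (α' j.castSucc) (α' j.succ) := by
        intro j
        simp only [Fin.succ_castSucc, Fin.snoc_castSucc]
      have h3 : f (Fin.last n)
            ((Fin.snoc (α := fun k : Fin (n + 2) => Fin (r k)) α' c) (Fin.last n).castSucc)
            ((Fin.snoc (α := fun k : Fin (n + 2) => Fin (r k)) α' c) (Fin.last n).succ)
          = f (Fin.last n) (α' (Fin.last n)) c := by
        simp only [Fin.succ_last, Fin.snoc_castSucc, Fin.snoc_last]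
      rw [Finset.prod_congr rfl (fun j _ => h2 j), h3]
      ring
    calc
      (∑ α' : ∀ k : Fin (n + 1), Fin (r k), ∑ c : Fin (r (n + 1)),
          (fun α => (∏ j : Fin (n + 1), f j (α j.castSucc) (α j.succ))
            * v (α (Fin.last (n + 1)))) (peelEquiv r n (α', c)))
        = ∑ α' : ∀ k : Fin (n + 1), Fin (r k),
            (∏ j : Fin n, f j.castSucc (α' j.castSucc) (α' j.succ))
            * (∑ c, f (Fin.last n) (α' (Fin.last n)) c * v c) := by
          apply Finset.sum_congr rfl
          intro α' _
          rw [Finset.mul_sum]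
          exact Finset.sum_congr rfl (fun c _ => key α' c)
      _ = ∑ i, ∑ m, chainM r (n + 1) f i m * v m := by
          rw [ih (fun j => f j.castSucc) (fun m => ∑ c, f (Fin.last n) m c * v c)]
          apply Finset.sum_congr rfl
          intro i _
          rw [chainM_succ]
          simp only [Matrix.mul_apply, Finset.sum_mul, Finset.mul_sum]
          rw [Finset.sum_comm]
          apply Finset.sum_congr rfl
          intro m _
          apply Finset.sum_congr rfl
          intro c _
          ring


lemma piCongrLeft_const_apply {ι ι' : Type*} (e : ι' ≃ ι) (g : ι' → ℝ) (s : ι) :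
    (Equiv.piCongrLeft (fun _ => ℝ) e) g s = g (e.symm s) := by
  simp [Equiv.piCongrLeft_apply_eq_cast]

lemma measurePreserving_join (μ : Measure ℝ) [SigmaFinite μ] (K M d : ℕ) (hKM : K + M = d) :
    MeasurePreserving
      (fun q : (Fin K → ℝ) × (Fin M → ℝ) =>
        (fun m : Fin d => if h' : (m : ℕ) < K then q.1 ⟨m, h'⟩
          else q.2 ⟨(m : ℕ) - K, by have := m.isLt; omega⟩))
      ((Measure.pi fun _ : Fin K => μ).prod (Measure.pi fun _ : Fin M => μ))
      (Measure.pi fun _ : Fin d => μ) := by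
  classical
  set P : Fin d → Prop := fun m => (m : ℕ) < K with hP
  let e1 : Fin K ≃ {m : Fin d // P m} :=
    { toFun := fun i => ⟨⟨(i : ℕ), by omega⟩, by simp [hP]⟩
      invFun := fun s => ⟨(s.1 : ℕ), s.2⟩
      left_inv := fun i => by ext; simp
      right_inv := fun s => by ext; simp }
  let e2 : Fin M ≃ {m : Fin d // ¬ P m} :=
    { toFun := fun i => ⟨⟨K + (i : ℕ), by omega⟩, by simp [hP]⟩
      invFun := fun s => ⟨(s.1 : ℕ) - K, by
        have h1 := s.1.isLt
        have h2 : ¬ ((s.1 : ℕ) < K) := s.2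
        omega⟩
      left_inv := fun i => by ext; simp
      right_inv := fun s => by
        ext
        have h2 : ¬ ((s.1 : ℕ) < K) := s.2
        simp
        omega }
  have mp1 := measurePreserving_piCongrLeft (fun _ : {m : Fin d // P m} => μ) e1
  have mp2 := measurePreserving_piCongrLeft (fun _ : {m : Fin d // ¬ P m} => μ) e2
  have mps := (measurePreserving_piEquivPiSubtypeProd (fun _ : Fin d => μ) P).symm
  have total := mps.comp (mp1.prod mp2)
  have heq : (fun q : (Fin K → ℝ) × (Fin M → ℝ) =>
        (fun m : Fin d => if h' : (m : ℕ) < K then q.1 ⟨m, h'⟩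
          else q.2 ⟨(m : ℕ) - K, by have := m.isLt; omega⟩))
      = (MeasurableEquiv.piEquivPiSubtypeProd (fun _ : Fin d => ℝ) P).symm ∘
        (Prod.map (MeasurableEquiv.piCongrLeft (fun _ : {m : Fin d // P m} => ℝ) e1)
          (MeasurableEquiv.piCongrLeft (fun _ : {m : Fin d // ¬ P m} => ℝ) e2)) := by
    funext q
    funext m
    show _ = (MeasurableEquiv.piEquivPiSubtypeProd (fun _ : Fin d => ℝ) P).symm
        (Prod.map _ _ q) m
    rw [show ((MeasurableEquiv.piEquivPiSubtypeProd (fun _ : Fin d => ℝ) P).symm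
        (Prod.map (MeasurableEquiv.piCongrLeft (fun _ : {m : Fin d // P m} => ℝ) e1)
          (MeasurableEquiv.piCongrLeft (fun _ : {m : Fin d // ¬ P m} => ℝ) e2) q)) m
      = if h' : P m then (Equiv.piCongrLeft (fun _ => ℝ) e1) q.1 ⟨m, h'⟩
        else (Equiv.piCongrLeft (fun _ => ℝ) e2) q.2 ⟨m, h'⟩ from rfl]
    by_cases h' : P m
    · rw [dif_pos h', dif_pos h', piCongrLeft_const_apply]
      rfl
    · rw [dif_neg h', dif_neg h', piCongrLeft_const_apply]
      rfl
  rw [heq]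
  exact total

noncomputable def ttValC {d : ℕ} (r : ℕ → ℕ)
    (G : ∀ j : Fin d, ℝ → Matrix (Fin (r j)) (Fin (r (j + 1))) ℝ)
    (x : Fin d → ℝ) : ℝ :=
  ∑ α : ∀ k : Fin (d + 1), Fin (r k),
    ∏ j : Fin d, G j (x j) (α j.castSucc) (α j.succ)


/-- core determining equations, continuous case: let `p` be a
finite-rank probability density on `I^d` (`I = [a,b]`, `d = e + 2 ≥ 2`), whose
reshapings `p(x_{1:k}; x_{k+1:d})` have singular value decompositions with
positive decreasing singular values `σ k` and `L²(I^k)`-orthonormal left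
singular functions `Φ k` (and orthonormal right singular functions `Ψ k`).
Then the core determining equations `G₁ = Φ₁`, `Φ_{k−1} G_k = Φ_k`
(`2 ≤ k ≤ d−1`), `Φ_{d−1} G_d = p(x_{1:d−1}; x_d)` have a unique solution, and
any solution gives the exact tensor-train representation
`p(x) = G₁(x₁,:) ⋯ G_d(:,x_d)`. -/
theorem stmt_0 (e : ℕ) (a b : ℝ) (hab : a ≤ b) (r : ℕ → ℕ)
    (h0 : r 0 = 1) (hdd : r (e + 2) = 1)
    (p : (Fin (e + 2) → ℝ) → ℝ)
    (hpnn : ∀ x, 0 ≤ p x)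
    (hpi : ∫ x, p x ∂(Measure.pi fun _ : Fin (e + 2) => volume.restrict (Set.Icc a b)) = 1)
    (Φ : (k : ℕ) → (Fin k → ℝ) → Fin (r k) → ℝ)
    (Ψ : (k : ℕ) → Fin (r k) → (Fin (e + 2 - k) → ℝ) → ℝ)
    (σ : (k : ℕ) → Fin (r k) → ℝ)
    (hσpos : ∀ k, 1 ≤ k → k ≤ e + 1 → ∀ α, 0 < σ k α)
    (hσdec : ∀ k, 1 ≤ k → k ≤ e + 1 → ∀ α β : Fin (r k), α ≤ β → σ k β ≤ σ k α)
    (hSVD : ∀ k, 1 ≤ k → k ≤ e + 1 →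
      ∀ (u : Fin k → ℝ) (z : Fin (e + 2 - k) → ℝ),
        p (fun m => if h : (m : ℕ) < k then u ⟨m, h⟩
            else z ⟨(m : ℕ) - k, by have := m.isLt; omega⟩)
          = ∑ α, σ k α * Φ k u α * Ψ k α z)
    (hΦInt : ∀ k, 1 ≤ k → k ≤ e + 1 → ∀ α β : Fin (r k),
      Integrable (fun u => Φ k u α * Φ k u β)
        (Measure.pi fun _ : Fin k => volume.restrict (Set.Icc a b)))
    (hΦON : ∀ k, 1 ≤ k → k ≤ e + 1 → ∀ α β : Fin (r k),
      (∫ u, Φ k u α * Φ k u β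
          ∂(Measure.pi fun _ : Fin k => volume.restrict (Set.Icc a b)))
        = if α = β then (1:ℝ) else 0)
    (hΨON : ∀ k, 1 ≤ k → k ≤ e + 1 → ∀ α β : Fin (r k),
      (∫ z, Ψ k α z * Ψ k β z
          ∂(Measure.pi fun _ : Fin (e + 2 - k) => volume.restrict (Set.Icc a b)))
        = if α = β then (1:ℝ) else 0) :
    let CDE : (∀ j : Fin (e + 2), ℝ →
        Matrix (Fin (r j)) (Fin (r (j + 1))) ℝ) → Prop := fun G =>
      (∀ (x : ℝ) (c : Fin (r 0)) (β : Fin (r 1)),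
        G ⟨0, by omega⟩ x c β = Φ 1 (fun _ => x) β) ∧
      (∀ (k : ℕ) (h2 : k + 2 ≤ e + 1),
        ∀ (u : Fin (k + 1) → ℝ) (x : ℝ) (β : Fin (r (k + 2))),
          (∑ c : Fin (r (k + 1)),
              Φ (k + 1) u c * G ⟨k + 1, by omega⟩ x c β)
            = Φ (k + 2)
                (fun j => if h : (j : ℕ) < k + 1 then u ⟨j, h⟩ else x) β) ∧
      (∀ (u : Fin (e + 1) → ℝ) (x : ℝ) (β : Fin (r (e + 2))),
        (∑ c : Fin (r (e + 1)),
            Φ (e + 1) u c * G ⟨e + 1, by omega⟩ x c β)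
          = p (fun m => if h : (m : ℕ) < e + 1 then u ⟨m, h⟩ else x))
    (∃! G, CDE G) ∧ (∀ G, CDE G → ∀ x, p x = ttValC r G x) := by
  classical
  intro CDE
  -- abbreviation for the product measures
  have hpInt : Integrable p
      (Measure.pi fun _ : Fin (e + 2) => volume.restrict (Set.Icc a b)) := by
    apply integrable_of_integral_ne_zero
    rw [hpi]
    exact one_ne_zero
  -- ## coefficient killing lemma on the Φ side
  have hΦkill : ∀ K, 1 ≤ K → K ≤ e + 1 → ∀ c : Fin (r K) → ℝ,
      (∀ᵐ u ∂(Measure.pi fun _ : Fin K => volume.restrict (Set.Icc a b)),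
        (∑ β, c β * Φ K u β) = 0) → ∀ γ, c γ = 0 := by
    intro K hK1 hK2 c hc γ
    have h1 : (fun u => (∑ β, c β * Φ K u β) * Φ K u γ)
        =ᵐ[Measure.pi fun _ : Fin K => volume.restrict (Set.Icc a b)]
        (fun _ => (0 : ℝ)) := by
      filter_upwards [hc] with u hu
      rw [hu, zero_mul]
    have h2 : ∫ u, (∑ β, c β * Φ K u β) * Φ K u γ
        ∂(Measure.pi fun _ : Fin K => volume.restrict (Set.Icc a b)) = 0 := by
      rw [integral_congr_ae h1, integral_zero]
    have h3 : (fun u => (∑ β, c β * Φ K u β) * Φ K u γ)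
        = fun u => ∑ β, c β * (Φ K u β * Φ K u γ) := by
      funext u; rw [Finset.sum_mul]
      apply Finset.sum_congr rfl; intro β _; ring
    rw [h3, integral_finset_sum _
      (fun β _ => ((hΦInt K hK1 hK2 β γ).const_mul (c β)))] at h2
    have h4 : ∀ β ∈ Finset.univ, (∫ u, c β * (Φ K u β * Φ K u γ)
        ∂(Measure.pi fun _ : Fin K => volume.restrict (Set.Icc a b)))
        = c β * if β = γ then (1:ℝ) else 0 := by
      intro β _; rw [integral_const_mul (c β) _, hΦON K hK1 hK2 β γ]
    rw [Finset.sum_congr rfl h4] at h2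
    simpa using h2
  -- ## square-integrability of the Ψ
  have hΨsq : ∀ K, 1 ≤ K → K ≤ e + 1 → ∀ β, Integrable
      (fun z => Ψ K β z * Ψ K β z)
      (Measure.pi fun _ : Fin (e + 2 - K) => volume.restrict (Set.Icc a b)) := by
    intro K hK1 hK2 β
    apply integrable_of_integral_ne_zero
    rw [hΨON K hK1 hK2 β β, if_pos rfl]
    exact one_ne_zero
  -- ## a.e. strong measurability of the Ψ
  have hΨmeas : ∀ K, 1 ≤ K → K ≤ e + 1 → ∀ β, AEStronglyMeasurable (Ψ K β)
      (Measure.pi fun _ : Fin (e + 2 - K) => volume.restrict (Set.Icc a b)) := by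
    intro K hK1 hK2
    have hKM : K + (e + 2 - K) = e + 2 := by omega
    have hmp := measurePreserving_join (volume.restrict (Set.Icc a b))
      K (e + 2 - K) (e + 2) hKM
    have hjoint : AEStronglyMeasurable
        (fun q : (Fin K → ℝ) × (Fin (e + 2 - K) → ℝ) =>
          p (fun m : Fin (e + 2) => if h' : (m : ℕ) < K then q.1 ⟨m, h'⟩
            else q.2 ⟨(m : ℕ) - K, by have := m.isLt; omega⟩))
        ((Measure.pi fun _ : Fin K => volume.restrict (Set.Icc a b)).prod
          (Measure.pi fun _ : Fin (e + 2 - K) => volume.restrict (Set.Icc a b))) :=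
      hpInt.aestronglyMeasurable.comp_quasiMeasurePreserving hmp.quasiMeasurePreserving
    have hslice := hjoint.prodMk_left
    let Vm : Submodule ℝ (Fin (r K) → ℝ) :=
      { carrier := {c | AEStronglyMeasurable (fun z => ∑ β, c β * Ψ K β z)
          (Measure.pi fun _ : Fin (e + 2 - K) => volume.restrict (Set.Icc a b))}
        add_mem' := by
          intro c c' hc hc'
          show AEStronglyMeasurable _ _
          have hfe : (fun z => ∑ β, (c + c') β * Ψ K β z)
              = fun z => (∑ β, c β * Ψ K β z) + ∑ β, c' β * Ψ K β z := by
            funext z; rw [← Finset.sum_add_distrib]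
            apply Finset.sum_congr rfl; intro β _
            simp [add_mul]
          rw [hfe]
          exact hc.add hc'
        zero_mem' := by
          show AEStronglyMeasurable _ _
          have hfe : (fun z => ∑ β, (0 : Fin (r K) → ℝ) β * Ψ K β z)
              = fun _ => (0:ℝ) := by
            funext z; simp
          rw [hfe]
          exact aestronglyMeasurable_const
        smul_mem' := by
          intro t c hc
          show AEStronglyMeasurable _ _
          have hfe : (fun z => ∑ β, (t • c) β * Ψ K β z)
              = fun z => t * ∑ β, c β * Ψ K β z := by
            funext z; rw [Finset.mul_sum]
            apply Finset.sum_congr rfl; intro β _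
            simp [mul_assoc]
          rw [hfe]
          exact (aestronglyMeasurable_const (b := t)).mul hc }
    have hae : ∀ᵐ w ∂(Measure.pi fun _ : Fin K => volume.restrict (Set.Icc a b)),
        (fun β => σ K β * Φ K w β) ∈ Vm := by
      filter_upwards [hslice] with w hw
      show AEStronglyMeasurable _ _
      apply hw.congr
      apply Filter.Eventually.of_forall
      intro z
      exact hSVD K hK1 hK2 w z
    have hspan : Submodule.span ℝ ((fun w => (fun β => σ K β * Φ K w β)) ''
        {w | (fun β => σ K β * Φ K w β) ∈ Vm}) = ⊤ := by
      apply span_top_of_dot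
      intro dvec hd
      have hz : ∀ᵐ w ∂(Measure.pi fun _ : Fin K => volume.restrict (Set.Icc a b)),
          (∑ β, (σ K β * dvec β) * Φ K w β) = 0 := by
        filter_upwards [hae] with w hw
        have h5 := hd _ (Set.mem_image_of_mem _ hw)
        calc ∑ β, (σ K β * dvec β) * Φ K w β
            = ∑ β, (σ K β * Φ K w β) * dvec β := by
              apply Finset.sum_congr rfl; intro β _; ring
          _ = 0 := h5
      have hcoef := hΦkill K hK1 hK2 (fun β => σ K β * dvec β) hz
      funext γ
      have h6 := hcoef γ
      have hσ := hσpos K hK1 hK2 γ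
      have h7 : dvec γ = 0 := by
        rcases mul_eq_zero.mp h6 with h | h
        · exact absurd h (ne_of_gt hσ)
        · exact h
      simpa using h7
    have hVtop : Vm = ⊤ := by
      rw [eq_top_iff, ← hspan]
      apply Submodule.span_le.2
      rintro v ⟨w, hw, rfl⟩
      exact hw
    intro β
    have hmem : (fun β' => if β' = β then (1:ℝ) else 0) ∈ Vm := by
      rw [hVtop]; trivial
    have hm2 : AEStronglyMeasurable
        (fun z => ∑ β', (if β' = β then (1:ℝ) else 0) * Ψ K β' z)
        (Measure.pi fun _ : Fin (e + 2 - K) => volume.restrict (Set.Icc a b)) := hmem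
    have hfe : (fun z => ∑ β', (if β' = β then (1:ℝ) else 0) * Ψ K β' z) = Ψ K β := by
      funext z
      simp [ite_mul, Finset.sum_ite_eq']
    rwa [hfe] at hm2
  
  -- ## integrability of products of Ψ
  have hΨprod : ∀ K, 1 ≤ K → K ≤ e + 1 → ∀ β γ, Integrable
      (fun z => Ψ K β z * Ψ K γ z)
      (Measure.pi fun _ : Fin (e + 2 - K) => volume.restrict (Set.Icc a b)) := by
    intro K hK1 hK2 β γ
    apply Integrable.mono ((hΨsq K hK1 hK2 β).add (hΨsq K hK1 hK2 γ))
      ((hΨmeas K hK1 hK2 β).mul (hΨmeas K hK1 hK2 γ))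
    apply Filter.Eventually.of_forall
    intro z
    simp only [Pi.mul_apply, Pi.add_apply]
    rw [Real.norm_eq_abs, Real.norm_eq_abs, abs_mul]
    have hnn : (0:ℝ) ≤ Ψ K β z * Ψ K β z + Ψ K γ z * Ψ K γ z :=
      add_nonneg (mul_self_nonneg _) (mul_self_nonneg _)
    rw [abs_of_nonneg hnn]
    nlinarith [sq_nonneg (|Ψ K β z| - |Ψ K γ z|), sq_abs (Ψ K β z), sq_abs (Ψ K γ z),
      abs_nonneg (Ψ K β z), abs_nonneg (Ψ K γ z)]
  -- ## the evaluation vectors of the Ψ span everything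
  have hVspan : ∀ K, 1 ≤ K → K ≤ e + 1 →
      Submodule.span ℝ {v : Fin (r K) → ℝ |
        ∃ z : Fin (e + 2 - K) → ℝ, v = fun β => σ K β * Ψ K β z} = ⊤ := by
    intro K hK1 hK2
    apply span_top_of_dot
    intro dvec hd
    have hzero : ∀ z, (∑ β, (σ K β * dvec β) * Ψ K β z) = 0 := by
      intro z
      have h5 := hd (fun β => σ K β * Ψ K β z) ⟨z, rfl⟩
      calc ∑ β, (σ K β * dvec β) * Ψ K β z
          = ∑ β, (σ K β * Ψ K β z) * dvec β := by
            apply Finset.sum_congr rfl; intro β _; ring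
        _ = 0 := h5
    funext γ
    have h1 : (fun z => (∑ β, (σ K β * dvec β) * Ψ K β z) * Ψ K γ z)
        = fun _ => (0 : ℝ) := by
      funext z; rw [hzero z, zero_mul]
    have h2 : ∫ z, (∑ β, (σ K β * dvec β) * Ψ K β z) * Ψ K γ z
        ∂(Measure.pi fun _ : Fin (e + 2 - K) => volume.restrict (Set.Icc a b)) = 0 := by
      rw [h1, integral_zero]
    have h3 : (fun z => (∑ β, (σ K β * dvec β) * Ψ K β z) * Ψ K γ z)
        = fun z => ∑ β, (σ K β * dvec β) * (Ψ K β z * Ψ K γ z) := by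
      funext z; rw [Finset.sum_mul]
      apply Finset.sum_congr rfl; intro β _; ring
    rw [h3, integral_finset_sum _
      (fun β _ => ((hΨprod K hK1 hK2 β γ).const_mul (σ K β * dvec β)))] at h2
    have h4 : ∀ β ∈ Finset.univ, (∫ z, (σ K β * dvec β) * (Ψ K β z * Ψ K γ z)
        ∂(Measure.pi fun _ : Fin (e + 2 - K) => volume.restrict (Set.Icc a b)))
        = (σ K β * dvec β) * if β = γ then (1:ℝ) else 0 := by
      intro β _
      rw [integral_const_mul (σ K β * dvec β) _, hΨON K hK1 hK2 β γ]
    rw [Finset.sum_congr rfl h4] at h2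
    simp only [mul_ite, mul_one, mul_zero, Finset.sum_ite_eq', Finset.mem_univ,
      if_true] at h2
    have hσ := hσpos K hK1 hK2 γ
    have h7 : dvec γ = 0 := by
      rcases mul_eq_zero.mp h2 with h | h
      · exact absurd h (ne_of_gt hσ)
      · exact h
    simpa using h7
  -- ## existence of the middle cores
  have hMid : ∀ m, 1 ≤ m → m ≤ e → ∀ x : ℝ,
      ∃ Mx : Matrix (Fin (r m)) (Fin (r (m + 1))) ℝ, ∀ (u : Fin m → ℝ) β,
        (∑ c, Φ m u c * Mx c β)
          = Φ (m + 1) (fun j : Fin (m + 1) =>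
              if hj : (j : ℕ) < m then u ⟨j, hj⟩ else x) β := by
    intro m hm1 hm2 x
    set A : Submodule ℝ ((Fin m → ℝ) → ℝ) :=
      Submodule.span ℝ (Set.range fun c : Fin (r m) => (fun u => Φ m u c)) with hA
    let L : (Fin (r (m + 1)) → ℝ) →ₗ[ℝ] ((Fin m → ℝ) → ℝ) :=
      { toFun := fun w => fun u => ∑ β, w β *
          Φ (m + 1) (fun j : Fin (m + 1) =>
            if hj : (j : ℕ) < m then u ⟨j, hj⟩ else x) β
        map_add' := by
          intro w w'; funext u; simp only [Pi.add_apply]; rw [← Finset.sum_add_distrib]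
          apply Finset.sum_congr rfl; intro β _; simp [add_mul]
        map_smul' := by
          intro t w; funext u
          simp only [RingHom.id_apply, Pi.smul_apply, smul_eq_mul]
          rw [Finset.mul_sum]
          apply Finset.sum_congr rfl; intro β _; simp [mul_assoc] }
    have hgen : ∀ z : Fin (e + 2 - (m + 1)) → ℝ,
        L (fun β => σ (m + 1) β * Ψ (m + 1) β z) ∈ A := by
      intro z
      have hLz : L (fun β => σ (m + 1) β * Ψ (m + 1) β z)
          = fun u => ∑ c, (σ m c * Ψ m c (fun i : Fin (e + 2 - m) =>
              if hi : (i : ℕ) < 1 then x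
              else z ⟨(i : ℕ) - 1, by have := i.isLt; omega⟩)) * Φ m u c := by
        funext u
        show (∑ β, (σ (m + 1) β * Ψ (m + 1) β z) *
            Φ (m + 1) (fun j : Fin (m + 1) =>
              if hj : (j : ℕ) < m then u ⟨j, hj⟩ else x) β) = _
        have e1 : (∑ β, (σ (m + 1) β * Ψ (m + 1) β z) *
            Φ (m + 1) (fun j : Fin (m + 1) =>
              if hj : (j : ℕ) < m then u ⟨j, hj⟩ else x) β)
            = ∑ β, σ (m + 1) β *
              Φ (m + 1) (fun j : Fin (m + 1) =>
                if hj : (j : ℕ) < m then u ⟨j, hj⟩ else x) β * Ψ (m + 1) β z := by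
          apply Finset.sum_congr rfl; intro β _; ring
        rw [e1, ← hSVD (m + 1) (by omega) (by omega)
          (fun j : Fin (m + 1) => if hj : (j : ℕ) < m then u ⟨j, hj⟩ else x) z]
        have harg : (fun m' : Fin (e + 2) => if h : (m' : ℕ) < m + 1
              then (fun j : Fin (m + 1) =>
                if hj : (j : ℕ) < m then u ⟨j, hj⟩ else x) ⟨m', h⟩
              else z ⟨(m' : ℕ) - (m + 1), by have := m'.isLt; omega⟩)
            = (fun m' : Fin (e + 2) => if h : (m' : ℕ) < m
              then u ⟨m', h⟩
              else (fun i : Fin (e + 2 - m) =>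
                if hi : (i : ℕ) < 1 then x
                else z ⟨(i : ℕ) - 1, by have := i.isLt; omega⟩)
                  ⟨(m' : ℕ) - m, by have := m'.isLt; omega⟩) := by
          funext m'
          by_cases h1 : (m' : ℕ) < m
          · rw [dif_pos (show (m' : ℕ) < m + 1 by omega), dif_pos h1]
            dsimp only
            have h1' : ((⟨(m' : ℕ), show (m' : ℕ) < m + 1 by omega⟩ : Fin (m + 1)) : ℕ) < m :=
              h1
            rw [dif_pos h1']
          · by_cases h2 : (m' : ℕ) < m + 1
            · rw [dif_pos h2, dif_neg h1]
              dsimp only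
              have h1' : ¬ ((⟨(m' : ℕ), h2⟩ : Fin (m + 1)) : ℕ) < m := h1
              rw [dif_neg h1']
              have h3 : ((⟨(m' : ℕ) - m, by have := m'.isLt; omega⟩ :
                  Fin (e + 2 - m)) : ℕ) < 1 := by
                show (m' : ℕ) - m < 1
                omega
              rw [dif_pos h3]
            · rw [dif_neg h2, dif_neg h1]
              dsimp only
              have h3 : ¬ ((⟨(m' : ℕ) - m, by have := m'.isLt; omega⟩ :
                  Fin (e + 2 - m)) : ℕ) < 1 := by
                show ¬ ((m' : ℕ) - m < 1)
                omega
              rw [dif_neg h3]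
              apply congrArg z
              apply Fin.val_injective
              show (m' : ℕ) - (m + 1) = (m' : ℕ) - m - 1
              omega
        rw [harg, hSVD m hm1 (by omega) u (fun i : Fin (e + 2 - m) =>
          if hi : (i : ℕ) < 1 then x else z ⟨(i : ℕ) - 1, by have := i.isLt; omega⟩)]
        apply Finset.sum_congr rfl; intro c _; ring
      rw [hLz]
      have hsum : (fun u => ∑ c, (σ m c * Ψ m c (fun i : Fin (e + 2 - m) =>
              if hi : (i : ℕ) < 1 then x
              else z ⟨(i : ℕ) - 1, by have := i.isLt; omega⟩)) * Φ m u c)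
          = ∑ c, (σ m c * Ψ m c (fun i : Fin (e + 2 - m) =>
              if hi : (i : ℕ) < 1 then x
              else z ⟨(i : ℕ) - 1, by have := i.isLt; omega⟩)) •
                (fun u => Φ m u c) := by
        funext u
        rw [Finset.sum_apply]
        apply Finset.sum_congr rfl; intro c _
        simp [smul_eq_mul]
      rw [hsum]
      apply Submodule.sum_mem
      intro c _
      exact Submodule.smul_mem _ _ (Submodule.subset_span ⟨c, rfl⟩)
    have hcomap : ∀ w : Fin (r (m + 1)) → ℝ, L w ∈ A := by
      intro w
      have hle : Submodule.span ℝ {v : Fin (r (m + 1)) → ℝ |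
          ∃ z : Fin (e + 2 - (m + 1)) → ℝ, v = fun β => σ (m + 1) β * Ψ (m + 1) β z}
          ≤ Submodule.comap L A := by
        apply Submodule.span_le.2
        rintro v ⟨z, rfl⟩
        exact hgen z
      rw [hVspan (m + 1) (by omega) (by omega)] at hle
      exact hle (Set.mem_univ w)
    have hex : ∀ β : Fin (r (m + 1)), ∃ cf : Fin (r m) → ℝ,
        (∑ c, cf c • (fun u => Φ m u c)) = L (fun β' => if β' = β then (1:ℝ) else 0) := by
      intro β
      have := hcomap (fun β' => if β' = β then (1:ℝ) else 0)
      rw [hA] at this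
      exact (Submodule.mem_span_range_iff_exists_fun ℝ).1 this
    choose cf hcf using hex
    refine ⟨fun c β => cf β c, ?_⟩
    intro u β
    have h6 := congrFun (hcf β) u
    rw [Finset.sum_apply] at h6
    have h7 : (∑ c, (cf β c • (fun u' => Φ m u' c)) u) = ∑ c, Φ m u c * cf β c := by
      apply Finset.sum_congr rfl; intro c _
      simp [smul_eq_mul, mul_comm]
    rw [h7] at h6
    have h8 : L (fun β' => if β' = β then (1:ℝ) else 0) u
        = Φ (m + 1) (fun j : Fin (m + 1) =>
            if hj : (j : ℕ) < m then u ⟨j, hj⟩ else x) β := by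
      show (∑ β', (if β' = β then (1:ℝ) else 0) *
          Φ (m + 1) (fun j : Fin (m + 1) =>
            if hj : (j : ℕ) < m then u ⟨j, hj⟩ else x) β') = _
      simp [ite_mul, Finset.sum_ite_eq']
    rw [h8] at h6
    exact h6
  
  -- ## the solution cores
  let Gdef : (m : ℕ) → ℝ → Matrix (Fin (r m)) (Fin (r (m + 1))) ℝ := fun m =>
    Nat.casesOn (motive := fun m => ℝ → Matrix (Fin (r m)) (Fin (r (m + 1))) ℝ) m
      (fun x _ β => Φ 1 (fun _ => x) β)
      (fun m' x c β =>
        if h : m' + 1 ≤ e then Classical.choose (hMid (m' + 1) (by omega) h x) c β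
        else σ (m' + 1) c * Ψ (m' + 1) c (fun _ => x))
  let Gsol : ∀ j : Fin (e + 2), ℝ → Matrix (Fin (r j)) (Fin (r (j + 1))) ℝ :=
    fun j => Gdef (j : ℕ)
  have hsol : CDE Gsol := by
    refine ⟨?_, ?_, ?_⟩
    · intro x c β
      rfl
    · intro k h2 u x β
      have hle : k + 1 ≤ e := by omega
      have hsolval : ∀ c, Gsol ⟨k + 1, by omega⟩ x c β
          = Classical.choose (hMid (k + 1) (by omega) hle x) c β := by
        intro c
        show (if h : k + 1 ≤ e then Classical.choose (hMid (k + 1) (by omega) h x) c β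
          else σ (k + 1) c * Ψ (k + 1) c (fun _ => x)) = _
        rw [dif_pos hle]
      calc ∑ c, Φ (k + 1) u c * Gsol ⟨k + 1, by omega⟩ x c β
          = ∑ c, Φ (k + 1) u c *
              Classical.choose (hMid (k + 1) (by omega) hle x) c β := by
            apply Finset.sum_congr rfl; intro c _; rw [hsolval c]
        _ = _ := Classical.choose_spec (hMid (k + 1) (by omega) hle x) u β
    · intro u x β
      have hsolval : ∀ c, Gsol ⟨e + 1, by omega⟩ x c β
          = σ (e + 1) c * Ψ (e + 1) c (fun _ => x) := by
        intro c
        show (if h : e + 1 ≤ e then Classical.choose (hMid (e + 1) (by omega) h x) c β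
          else σ (e + 1) c * Ψ (e + 1) c (fun _ => x)) = _
        rw [dif_neg (by omega)]
      calc ∑ c, Φ (e + 1) u c * Gsol ⟨e + 1, by omega⟩ x c β
          = ∑ c, σ (e + 1) c * Φ (e + 1) u c * Ψ (e + 1) c (fun _ => x) := by
            apply Finset.sum_congr rfl; intro c _; rw [hsolval c]; ring
        _ = p (fun m => if h : (m : ℕ) < e + 1 then u ⟨m, h⟩
              else (fun _ : Fin (e + 2 - (e + 1)) => x)
                ⟨(m : ℕ) - (e + 1), by have := m.isLt; omega⟩) :=
            (hSVD (e + 1) (by omega) (by omega) u (fun _ => x)).symm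
        _ = p (fun m => if h : (m : ℕ) < e + 1 then u ⟨m, h⟩ else x) := by
            apply congrArg p; funext m'
            by_cases h : (m' : ℕ) < e + 1
            · rw [dif_pos h]
            · rw [dif_neg h]
  -- ## uniqueness
  have huniq : ∀ G1 G2, CDE G1 → CDE G2 → G1 = G2 := by
    intro G1 G2 hGa hGb
    obtain ⟨ha1, ha2, ha3⟩ := hGa
    obtain ⟨hb1, hb2, hb3⟩ := hGb
    funext j
    rcases j with ⟨jv, hj⟩
    funext x c β
    by_cases hj0 : jv = 0
    · subst hj0
      exact (ha1 x c β).trans (hb1 x c β).symm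
    · by_cases hje : jv ≤ e
      · obtain ⟨k, rfl⟩ : ∃ k, jv = k + 1 := ⟨jv - 1, by omega⟩
        have h2 : k + 2 ≤ e + 1 := by omega
        have hz : ∀ᵐ u ∂(Measure.pi fun _ : Fin (k + 1) => volume.restrict (Set.Icc a b)),
            (∑ c', (G1 ⟨k + 1, hj⟩ x c' β - G2 ⟨k + 1, hj⟩ x c' β) * Φ (k + 1) u c')
              = 0 := by
          apply Filter.Eventually.of_forall
          intro u
          have e1 : (∑ c', Φ (k + 1) u c' * G1 ⟨k + 1, hj⟩ x c' β)
              = Φ (k + 2) (fun j => if h : (j : ℕ) < k + 1 then u ⟨j, h⟩ else x) β :=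
            ha2 k h2 u x β
          have e2 : (∑ c', Φ (k + 1) u c' * G2 ⟨k + 1, hj⟩ x c' β)
              = Φ (k + 2) (fun j => if h : (j : ℕ) < k + 1 then u ⟨j, h⟩ else x) β :=
            hb2 k h2 u x β
          calc (∑ c', (G1 ⟨k + 1, hj⟩ x c' β - G2 ⟨k + 1, hj⟩ x c' β) * Φ (k + 1) u c')
              = (∑ c', Φ (k + 1) u c' * G1 ⟨k + 1, hj⟩ x c' β)
                - ∑ c', Φ (k + 1) u c' * G2 ⟨k + 1, hj⟩ x c' β := by
                rw [← Finset.sum_sub_distrib]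
                apply Finset.sum_congr rfl; intro c' _; ring
            _ = 0 := by rw [e1, e2, sub_self]
        have hk := hΦkill (k + 1) (by omega) (by omega)
          (fun c' => G1 ⟨k + 1, hj⟩ x c' β - G2 ⟨k + 1, hj⟩ x c' β) hz c
        exact sub_eq_zero.mp hk
      · have hjv : jv = e + 1 := by omega
        subst hjv
        have hz : ∀ᵐ u ∂(Measure.pi fun _ : Fin (e + 1) => volume.restrict (Set.Icc a b)),
            (∑ c', (G1 ⟨e + 1, hj⟩ x c' β - G2 ⟨e + 1, hj⟩ x c' β) * Φ (e + 1) u c')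
              = 0 := by
          apply Filter.Eventually.of_forall
          intro u
          have e1 : (∑ c', Φ (e + 1) u c' * G1 ⟨e + 1, hj⟩ x c' β)
              = p (fun m => if h : (m : ℕ) < e + 1 then u ⟨m, h⟩ else x) :=
            ha3 u x β
          have e2 : (∑ c', Φ (e + 1) u c' * G2 ⟨e + 1, hj⟩ x c' β)
              = p (fun m => if h : (m : ℕ) < e + 1 then u ⟨m, h⟩ else x) :=
            hb3 u x β
          calc (∑ c', (G1 ⟨e + 1, hj⟩ x c' β - G2 ⟨e + 1, hj⟩ x c' β) * Φ (e + 1) u c')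
              = (∑ c', Φ (e + 1) u c' * G1 ⟨e + 1, hj⟩ x c' β)
                - ∑ c', Φ (e + 1) u c' * G2 ⟨e + 1, hj⟩ x c' β := by
                rw [← Finset.sum_sub_distrib]
                apply Finset.sum_congr rfl; intro c' _; ring
            _ = 0 := by rw [e1, e2, sub_self]
        have hk := hΦkill (e + 1) (by omega) (by omega)
          (fun c' => G1 ⟨e + 1, hj⟩ x c' β - G2 ⟨e + 1, hj⟩ x c' β) hz c
        exact sub_eq_zero.mp hk
  constructor
  · exact ⟨Gsol, hsol, fun G' hG' => huniq G' Gsol hG' hsol⟩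
  -- ## the tensor-train representation
  · intro G hG xx
    obtain ⟨hG1, hG2, hG3⟩ := hG
    have claimA : ∀ k, ∀ hk : k ≤ e, ∀ β : Fin (r (k + 1)),
        (∑ i, chainM r (k + 1)
          (fun j : Fin (k + 1) =>
            G (Fin.castLE (by omega) j) (xx (Fin.castLE (by omega) j))) i β)
        = Φ (k + 1) (fun j : Fin (k + 1) => xx (Fin.castLE (by omega) j)) β := by
      intro k
      induction k with
      | zero =>
        intro hk β
        rw [chainM_succ r 0]
        have h00 : chainM r 0 (fun j : Fin 0 =>
            (fun j : Fin 1 =>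
              G (Fin.castLE (by omega) j) (xx (Fin.castLE (by omega) j))) j.castSucc)
            = 1 := rfl
        rw [h00, Matrix.one_mul]
        have hval : ∀ i : Fin (r 0),
            (fun j : Fin 1 =>
              G (Fin.castLE (by omega) j) (xx (Fin.castLE (by omega) j))) (Fin.last 0) i β
            = Φ 1 (fun _ => xx (Fin.castLE (by omega) (Fin.last 0))) β := by
          intro i
          exact hG1 (xx (Fin.castLE (by omega) (Fin.last 0))) i β
        rw [Finset.sum_congr rfl (fun i _ => hval i), Finset.sum_const,
          Finset.card_univ, Fintype.card_fin, h0, one_smul]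
        apply congrArg (fun t => Φ 1 t β)
        funext j
        apply congrArg xx
        apply Fin.val_injective
        simp only [Fin.coe_castLE]
        omega
      | succ k ih =>
        intro hk β
        rw [chainM_succ r (k + 1)]
        have hcs : (fun j : Fin (k + 1) =>
            (fun j : Fin (k + 2) =>
              G (Fin.castLE (by omega) j) (xx (Fin.castLE (by omega) j))) j.castSucc)
            = (fun j : Fin (k + 1) =>
              G (Fin.castLE (by omega) j) (xx (Fin.castLE (by omega) j))) :=
          funext fun j => rfl
        rw [hcs]
        have hk' : k ≤ e := by omega
        calc (∑ i, (chainM r (k + 1)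
              (fun j : Fin (k + 1) =>
                G (Fin.castLE (by omega) j) (xx (Fin.castLE (by omega) j))) *
              (show Matrix (Fin (r (k + 1))) (Fin (r (k + 2))) ℝ from
                (fun j : Fin (k + 2) =>
                  G (Fin.castLE (by omega) j) (xx (Fin.castLE (by omega) j)))
                  (Fin.last (k + 1)))) i β)
            = ∑ m, (∑ i, chainM r (k + 1)
                (fun j : Fin (k + 1) =>
                  G (Fin.castLE (by omega) j) (xx (Fin.castLE (by omega) j))) i m) *
                (fun j : Fin (k + 2) =>
                  G (Fin.castLE (by omega) j) (xx (Fin.castLE (by omega) j)))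
                  (Fin.last (k + 1)) m β := by
              simp only [Matrix.mul_apply]
              rw [Finset.sum_comm]
              apply Finset.sum_congr rfl; intro m _
              rw [Finset.sum_mul]
          _ = ∑ m, Φ (k + 1) (fun j : Fin (k + 1) => xx (Fin.castLE (by omega) j)) m *
                (fun j : Fin (k + 2) =>
                  G (Fin.castLE (by omega) j) (xx (Fin.castLE (by omega) j)))
                  (Fin.last (k + 1)) m β := by
              apply Finset.sum_congr rfl; intro m _
              rw [ih hk' m]
          _ = Φ (k + 2) (fun j : Fin (k + 2) =>
                if h : (j : ℕ) < k + 1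
                then (fun j' : Fin (k + 1) => xx (Fin.castLE (by omega) j')) ⟨j, h⟩
                else xx (Fin.castLE (by omega) (Fin.last (k + 1)))) β :=
            hG2 k (by omega) (fun j : Fin (k + 1) => xx (Fin.castLE (by omega) j))
              (xx (Fin.castLE (by omega) (Fin.last (k + 1)))) β
          _ = Φ (k + 2) (fun j : Fin (k + 2) => xx (Fin.castLE (by omega) j)) β := by
              apply congrArg (fun t => Φ (k + 2) t β)
              funext j
              by_cases hj : (j : ℕ) < k + 1
              · rw [dif_pos hj]
                rfl
              · rw [dif_neg hj]
                apply congrArg xx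
                apply Fin.val_injective
                simp only [Fin.coe_castLE]
                have := j.isLt
                show (Fin.last (k + 1) : ℕ) = (j : ℕ)
                simp only [Fin.val_last]
                omega
    have hfinal : ∀ β : Fin (r (e + 2)),
        (∑ i, chainM r (e + 2) (fun j : Fin (e + 2) => G j (xx j)) i β) = p xx := by
      intro β
      rw [chainM_succ r (e + 1)]
      have hcs : (fun j : Fin (e + 1) =>
          (fun j : Fin (e + 2) => G j (xx j)) j.castSucc)
          = (fun j : Fin (e + 1) =>
            G (Fin.castLE (by omega) j) (xx (Fin.castLE (by omega) j))) :=
        funext fun j => rfl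
      rw [hcs]
      calc (∑ i, (chainM r (e + 1)
            (fun j : Fin (e + 1) =>
              G (Fin.castLE (by omega) j) (xx (Fin.castLE (by omega) j))) *
            (show Matrix (Fin (r (e + 1))) (Fin (r (e + 2))) ℝ from
              (fun j : Fin (e + 2) => G j (xx j)) (Fin.last (e + 1)))) i β)
          = ∑ m, (∑ i, chainM r (e + 1)
              (fun j : Fin (e + 1) =>
                G (Fin.castLE (by omega) j) (xx (Fin.castLE (by omega) j))) i m) *
              (fun j : Fin (e + 2) => G j (xx j)) (Fin.last (e + 1)) m β := by
            simp only [Matrix.mul_apply]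
            rw [Finset.sum_comm]
            apply Finset.sum_congr rfl; intro m _
            rw [Finset.sum_mul]
        _ = ∑ m, Φ (e + 1) (fun j : Fin (e + 1) => xx (Fin.castLE (by omega) j)) m *
              (fun j : Fin (e + 2) => G j (xx j)) (Fin.last (e + 1)) m β := by
            apply Finset.sum_congr rfl; intro m _
            rw [claimA e (le_refl e) m]
        _ = p (fun m' => if h : (m' : ℕ) < e + 1
              then (fun j : Fin (e + 1) => xx (Fin.castLE (by omega) j)) ⟨m', h⟩
              else xx (Fin.last (e + 1))) :=
          hG3 (fun j : Fin (e + 1) => xx (Fin.castLE (by omega) j))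
            (xx (Fin.last (e + 1))) β
        _ = p xx := by
            apply congrArg p
            funext m'
            by_cases h : (m' : ℕ) < e + 1
            · rw [dif_pos h]
              rfl
            · rw [dif_neg h]
              apply congrArg xx
              apply Fin.val_injective
              have := m'.isLt
              show (Fin.last (e + 1) : ℕ) = (m' : ℕ)
              simp only [Fin.val_last]
              omega
    have hpath := path_sum_w r (e + 2) (fun j : Fin (e + 2) => G j (xx j))
      (fun _ => (1 : ℝ))
    have htt : ttValC r G xx
        = ∑ i, ∑ m, chainM r (e + 2) (fun j : Fin (e + 2) => G j (xx j)) i m * (1:ℝ) := by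
      rw [← hpath]
      unfold ttValC
      apply Finset.sum_congr rfl; intro α _
      rw [mul_one]
    rw [htt, Finset.sum_comm]
    have hlast : ∀ m' : Fin (r (e + 2)),
        (∑ i, chainM r (e + 2) (fun j : Fin (e + 2) => G j (xx j)) i m' * (1:ℝ))
        = p xx := by
      intro m'
      rw [← hfinal m']
      apply Finset.sum_congr rfl; intro i _
      rw [mul_one]
    rw [Finset.sum_congr rfl (fun m' _ => hlast m'), Finset.sum_const,
      Finset.card_univ, Fintype.card_fin, hdd, one_smul]
end

section
/- Conversely, if every unfolding F_k of a d-tensor F ∈ ℝ^{n×⋯×n} has rank at most r_k for 1 ≤ k ≤ d−1, then F admits an exact tensor-train representation F(i_1,…,i_d) = G_1(i_1,:) G_2(:,i_2,:) ⋯ G_d(:,i_d) with cores of ranks exactly rank(F_k). -/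
open BigOperators

/-- Value of a discrete tensor-train with cores `G` and ranks `r` at a
multi-index `i`. -/
noncomputable def ttVal {d n : ℕ} (r : ℕ → ℕ)
    (G : ∀ j : Fin d, Fin n → Matrix (Fin (r j)) (Fin (r (j + 1))) ℝ)
    (i : Fin d → Fin n) : ℝ :=
  ∑ α : ∀ k : Fin (d + 1), Fin (r k),
    ∏ j : Fin d, G j (i j) (α j.castSucc) (α j.succ)

/-- The `k`-th unfolding of a `d`-tensor. -/
def unfold {d n : ℕ} (P : (Fin d → Fin n) → ℝ) (k : ℕ) (hk : k ≤ d) :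
    Matrix (Fin k → Fin n) (Fin (d - k) → Fin n) ℝ :=
  fun a b => P fun m =>
    if h : (m : ℕ) < k then a ⟨m, h⟩
    else b ⟨(m : ℕ) - k, by have := m.isLt; omega⟩


open Matrix in
theorem exists_rank_fact {M P : Type*} [Fintype M] [Fintype P] [DecidableEq M] [DecidableEq P]
    (A : Matrix M P ℝ) :
    ∃ (U : Matrix M (Fin A.rank) ℝ) (V : Matrix (Fin A.rank) P ℝ),
      A = U * V ∧ ∃ W : Matrix P (Fin A.rank) ℝ, V * W = 1 := by
  classical
  set S := LinearMap.range A.mulVecLin with hS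
  let b : Module.Basis (Fin A.rank) ℝ S := Module.finBasis ℝ S
  have hcol : ∀ p : P, A.mulVec (Pi.single p 1) ∈ S := fun p => LinearMap.mem_range_self _ _
  refine ⟨fun x j => (b j : M → ℝ) x, fun j p => b.repr ⟨A.mulVec (Pi.single p 1), hcol p⟩ j, ?_, ?_⟩
  · ext x p
    erw [Matrix.mul_apply]
    have h2 := b.sum_repr ⟨A.mulVec (Pi.single p 1), hcol p⟩
    have h3 := congrArg (fun v : S => (v : M → ℝ) x) h2
    simp only [Submodule.coe_sum, Finset.sum_apply, Pi.smul_apply, smul_eq_mul] at h3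
    have h1 : A x p = ((⟨A.mulVec (Pi.single p 1), hcol p⟩ : S) : M → ℝ) x := by
      simp [Matrix.mulVec, dotProduct, Pi.single_apply]
    rw [h1, show ((⟨A.mulVec (Pi.single p 1), hcol p⟩ : S) : M → ℝ) x
        = (A.mulVec (Pi.single p 1)) x from rfl, ← h3]
    refine Finset.sum_congr rfl fun j _ => ?_
    simp [mul_comm]
  · have hsur : ∀ j : Fin A.rank, ∃ u : P → ℝ, A.mulVec u = (b j : M → ℝ) := fun j => (b j).2
    choose u hu using hsur
    refine ⟨fun p j => u j p, ?_⟩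
    ext j j'
    erw [Matrix.mul_apply]
    have key : ∀ (w : P → ℝ), (∑ p, b.repr ⟨A.mulVec (Pi.single p 1), hcol p⟩ j * w p)
        = b.repr ⟨A.mulVec w, LinearMap.mem_range_self _ _⟩ j := by
      intro w
      have hv : (⟨A.mulVec w, LinearMap.mem_range_self _ _⟩ : S)
          = ∑ p, w p • (⟨A.mulVec (Pi.single p 1), hcol p⟩ : S) := by
        apply Subtype.ext
        push_cast [Submodule.coe_sum]
        ext x
        simp [Finset.sum_apply, Matrix.mulVec, dotProduct, Pi.single_apply, mul_comm]
      rw [hv, map_sum]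
      rw [Finsupp.finset_sum_apply]
      exact Finset.sum_congr rfl fun p _ => by
        rw [_root_.map_smul]; simp [mul_comm]
    rw [key]
    have hb : (⟨A.mulVec (u j'), LinearMap.mem_range_self _ _⟩ : S) = b j' :=
      Subtype.ext (hu j')
    rw [hb, b.repr_self]
    simp [Finsupp.single_apply, Matrix.one_apply, eq_comm]

section Q
variable {d n : ℕ} (r : ℕ → ℕ) (G : ∀ j : Fin d, Fin n → Matrix (Fin (r j)) (Fin (r (j + 1))) ℝ)

noncomputable def Qpart (k : ℕ) (hk : k ≤ d) (a : Fin k → Fin n) (β : Fin (r k)) : ℝ :=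
  ∑ α : ∀ mm : Fin (k + 1), Fin (r mm),
    if α (Fin.last k) = β then
      ∏ j : Fin k, G ⟨j.1, lt_of_lt_of_le j.2 hk⟩ (a j) (α j.castSucc) (α j.succ)
    else 0

theorem ttVal_eq_sum_Qpart (i : Fin d → Fin n) :
    ttVal r G i = ∑ β : Fin (r d), Qpart r G d le_rfl i β := by
  unfold ttVal Qpart
  rw [Finset.sum_comm]
  refine Finset.sum_congr rfl fun α _ => ?_
  rw [Finset.sum_ite_eq]
  simp [Fin.eta]

theorem Qpart_succ (k : ℕ) (hk : k + 1 ≤ d) (a : Fin (k+1) → Fin n) (β : Fin (r (k+1))) :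
    Qpart r G (k+1) hk a β =
      ∑ γ : Fin (r k), Qpart r G k (by omega) (fun j => a j.castSucc) γ *
        G ⟨k, hk⟩ (a (Fin.last k)) γ β := by
  have hrhs : ∑ γ : Fin (r k), Qpart r G k (by omega) (fun j => a j.castSucc) γ *
        G ⟨k, hk⟩ (a (Fin.last k)) γ β
      = ∑ α' : ∀ mm : Fin (k+1), Fin (r mm),
          (∏ j : Fin k, G ⟨j.1, by omega⟩ (a j.castSucc) (α' j.castSucc) (α' j.succ)) *
            G ⟨k, hk⟩ (a (Fin.last k)) (α' (Fin.last k)) β := by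
    unfold Qpart
    simp only [Finset.sum_mul, ite_mul, zero_mul]
    rw [Finset.sum_comm]
    refine Finset.sum_congr rfl fun α' _ => ?_
    rw [Finset.sum_ite_eq]
    simp
  rw [hrhs]
  unfold Qpart
  rw [← Equiv.sum_comp (Fin.snocEquiv (fun mm : Fin (k+2) => Fin (r mm)))]
  rw [Fintype.sum_prod_type]
  rw [Finset.sum_comm]
  refine Finset.sum_congr rfl fun α' _ => ?_
  have hlast : ∀ x : Fin (r (k+1)),
      (Fin.snocEquiv (fun mm : Fin (k+2) => Fin (r mm)) (x, α')) (Fin.last (k+1)) = x := by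
    intro x; simp [Fin.snocEquiv]
  simp only [hlast]
  rw [Finset.sum_ite_eq']
  simp only [Finset.mem_univ, if_true]
  rw [Fin.prod_univ_castSucc]
  congr 1
  · refine Finset.prod_congr rfl fun j _ => ?_
    simp only [Fin.snocEquiv, Equiv.coe_fn_mk, Fin.succ_castSucc, Fin.snoc_castSucc,
      Fin.coe_castSucc]
  · simp only [Fin.snocEquiv, Equiv.coe_fn_mk, Fin.succ_last, Fin.snoc_castSucc, Fin.snoc_last]
    rfl

theorem Qpart_zero (h0 : 0 ≤ d) (a : Fin 0 → Fin n) (β : Fin (r 0)) :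
    Qpart r G 0 h0 a β = 1 := by
  unfold Qpart
  rw [Finset.sum_eq_single (fun mm : Fin 1 => Fin.cast (congrArg r (by omega : (0:ℕ) = mm.1)) β)]
  · simp
  · intro α _ hne
    rw [if_neg]
    intro hab
    apply hne
    funext mm
    have h1 : mm = Fin.last 0 := Subsingleton.elim _ _
    subst h1
    exact hab.trans (by apply Fin.ext; simp)
  · intro h; exact absurd (Finset.mem_univ _) h

end Q

@[simp] theorem Fin.val_mk' {n a : ℕ} (h : a < n) : ((⟨a, h⟩ : Fin n) : ℕ) = a := rfl

/-- Oseledets: if every unfolding `F_k` has rank at most `r' k`,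
then `F` admits an exact tensor-train representation whose ranks equal exactly
`rank F_k` (in particular at most `r' k`). -/
theorem stmt_14 (d n : ℕ) (hd : 1 ≤ d) (F : (Fin d → Fin n) → ℝ)
    (r' : ℕ → ℕ)
    (hr' : ∀ k (h1 : 1 ≤ k) (h2 : k ≤ d - 1),
      Matrix.rank (unfold F k (by omega)) ≤ r' k) :
    ∃ (r : ℕ → ℕ) (G : ∀ j : Fin d, Fin n → Matrix (Fin (r j)) (Fin (r (j + 1))) ℝ),
      r 0 = 1 ∧ r d = 1 ∧
      (∀ k (h1 : 1 ≤ k) (h2 : k ≤ d - 1),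
        r k = Matrix.rank (unfold F k (by omega))) ∧
      (∀ i, ttVal r G i = F i) := by
  classical
  obtain ⟨m, rfl⟩ : ∃ m, d = m + 1 := ⟨d - 1, by omega⟩
  rcases Nat.eq_zero_or_pos m with rfl | hm
  · -- d = 1
    refine ⟨fun _ => 1, fun j x _ _ => F (fun _ => x), rfl, rfl, ?_, ?_⟩
    · intro k h1 h2; omega
    · intro i
      unfold ttVal; rw [Fintype.sum_unique, Fin.prod_univ_one]
      exact congrArg F (funext fun j => congrArg i (Fin.ext (by omega)))
  · -- d = m+1, m ≥ 1
    set r : ℕ → ℕ := fun k =>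
      if h : 1 ≤ k ∧ k ≤ m then (unfold F k (by omega : k ≤ m + 1)).rank else 1 with hrdef
    have hr0 : r 0 = 1 := by simp only [hrdef]; rw [dif_neg (by omega)]
    have hrd : r (m + 1) = 1 := by simp only [hrdef]; rw [dif_neg (by omega)]
    have hrk : ∀ k (h1 : 1 ≤ k) (h2 : k ≤ m),
        r k = (unfold F k (by omega : k ≤ m + 1)).rank := by
      intro k h1 h2
      simp only [hrdef]; rw [dif_pos ⟨h1, h2⟩]
    have hfac : ∀ k (hk1 : 1 ≤ k) (hk2 : k ≤ m),
        ∃ (U : Matrix (Fin k → Fin n) (Fin (r k)) ℝ)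
          (V : Matrix (Fin (r k)) (Fin (m + 1 - k) → Fin n) ℝ),
          unfold F k (by omega) = U * V ∧ ∃ W : Matrix (Fin (m + 1 - k) → Fin n) (Fin (r k)) ℝ, V * W = 1 := by
      intro k h1 h2
      rw [hrk k h1 h2]
      exact exists_rank_fact _
    choose U V hUV hVW using hfac
    choose W hW using hVW
    -- chain lemma
    have hchain : ∀ k (h1 : 1 ≤ k) (h2 : k + 1 ≤ m),
        ∃ Gc : Fin n → Matrix (Fin (r k)) (Fin (r (k + 1))) ℝ,
          ∀ (a : Fin k → Fin n) (x : Fin n) (α : Fin (r (k + 1))),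
            U (k + 1) (by omega) h2
              (fun j : Fin (k + 1) => if h : (j : ℕ) < k then a ⟨j.1, h⟩ else x) α
            = ∑ β, U k h1 (by omega) a β * Gc x β α := by
      intro k h1 h2
      refine ⟨fun x γ α => ∑ b : Fin (m + 1 - (k + 1)) → Fin n,
        V k h1 (by omega) γ
          (fun j => if h : (j : ℕ) = 0 then x else b ⟨(j : ℕ) - 1, by have := j.2; omega⟩)
        * W (k + 1) (by omega) h2 b α, ?_⟩
      intro a x α
      have hU : U (k + 1) (by omega) h2
          = unfold F (k + 1) (by omega) * W (k + 1) (by omega) h2 := by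
        have h := hUV (k + 1) (by omega) h2
        have hw := hW (k + 1) (by omega) h2
        rw [h, Matrix.mul_assoc, hw, Matrix.mul_one]
      have hidx : ∀ b : Fin (m + 1 - (k + 1)) → Fin n,
          unfold F (k + 1) (by omega)
            (fun j : Fin (k + 1) => if h : (j : ℕ) < k then a ⟨j.1, h⟩ else x) b
          = unfold F k (by omega) a
            (fun j => if h : (j : ℕ) = 0 then x else b ⟨(j : ℕ) - 1, by have := j.2; omega⟩) := by
        intro b
        show F _ = F _
        refine congrArg F (funext fun mm => ?_)
        simp only [Fin.val_mk']
        split_ifs <;>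
          first
            | rfl
            | omega
            | (exact congrArg a (Fin.ext (by omega)))
            | (exact congrArg b (Fin.ext (by omega)))
      have happ := congrFun (congrFun hU
        (fun j : Fin (k + 1) => if h : (j : ℕ) < k then a ⟨j.1, h⟩ else x)) α
      rw [happ, Matrix.mul_apply]
      have hAk := hUV k h1 (by omega)
      calc ∑ b, unfold F (k + 1) (by omega)
            (fun j : Fin (k + 1) => if h : (j : ℕ) < k then a ⟨j.1, h⟩ else x) b
            * W (k + 1) (by omega) h2 b α
          = ∑ b, (∑ γ, U k h1 (by omega) a γ * V k h1 (by omega) γ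
              (fun j => if h : (j : ℕ) = 0 then x
                else b ⟨(j : ℕ) - 1, by have := j.2; omega⟩))
              * W (k + 1) (by omega) h2 b α := by
            refine Finset.sum_congr rfl fun b _ => ?_
            rw [hidx b, hAk, Matrix.mul_apply]
        _ = _ := by
            simp only [Finset.sum_mul, Finset.mul_sum, mul_assoc]
            rw [Finset.sum_comm]
    choose Gc hGc using hchain
    -- the cores
    set G : ∀ j : Fin (m + 1), Fin n → Matrix (Fin (r j)) (Fin (r (j + 1))) ℝ :=
      fun j x =>
        if hj0 : (j : ℕ) = 0 then
          (fun _ γ => U (j.1 + 1) (by omega) (by omega) (fun _ => x) γ)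
        else if hjm : (j : ℕ) = m then
          (fun γ _ => V j.1 (by omega) (by omega) γ (fun _ => x))
        else Gc j.1 (by omega) (by omega) x
      with hGdef
    refine ⟨r, G, hr0, hrd, ?_, ?_⟩
    · intro k h1 h2
      exact hrk k h1 (by omega)
    · -- the invariant
      have hinv : ∀ k (h1 : 1 ≤ k) (h2 : k ≤ m) (a : Fin k → Fin n) (β : Fin (r k)),
          Qpart r G k (by omega) a β = U k h1 h2 a β := by
        intro k
        induction k with
        | zero => intro h1; omega
        | succ p ih =>
          intro h1 h2 a β
          rw [Qpart_succ r G p (by omega) a β]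
          by_cases hp : p = 0
          · subst hp
            have hG0 : ∀ (x : Fin n) (γ : Fin (r 0)) (δ : Fin (r (0 + 1))), G ⟨0, by omega⟩ x γ δ
                = U 1 (by omega) (by omega) (fun _ => x) δ := by
              intro x γ δ
              simp only [hGdef, Fin.val_mk']
              erw [dif_pos rfl]
            simp only [Qpart_zero, hG0, one_mul]
            rw [Finset.sum_const, Finset.card_univ, Fintype.card_fin, hr0, one_smul]
            have ha : (fun _ : Fin 1 => a (Fin.last 0)) = a :=
              funext fun j => congrArg a (Fin.ext (by omega))
            rw [ha]
          · have hp1 : 1 ≤ p := by omega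
            have hGp : ∀ x, G ⟨p, by omega⟩ x = Gc p hp1 (by omega : p + 1 ≤ m) x := by
              intro x
              simp only [hGdef, Fin.val_mk']
              erw [dif_neg hp, dif_neg (show ¬p = m by omega)]
            simp only [hGp, ih hp1 (by omega)]
            rw [← hGc p hp1 (by omega) (fun j => a j.castSucc) (a (Fin.last p)) β]
            have ha : (fun j : Fin (p + 1) =>
                if h : (j : ℕ) < p then (fun t : Fin p => a t.castSucc) ⟨j.1, h⟩
                else a (Fin.last p)) = a := by
              funext j
              by_cases h : (j : ℕ) < p
              · rw [dif_pos h]; exact congrArg a (Fin.ext rfl)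
              · rw [dif_neg h]; exact congrArg a (Fin.ext (by simp only [Fin.val_last, Fin.val_mk']; omega))
            rw [ha]
      intro i
      rw [ttVal_eq_sum_Qpart]
      have hGm : ∀ x γ (β : Fin (r (m + 1))), G ⟨m, by omega⟩ x γ β
          = V m (by omega) le_rfl γ (fun _ => x) := by
        intro x γ β
        simp only [hGdef, Fin.val_mk']
        erw [dif_neg (show ¬m = 0 by omega), dif_pos rfl]
      have hpeel : ∀ β : Fin (r (m + 1)), Qpart r G (m + 1) le_rfl i β
          = ∑ γ : Fin (r m), U m (by omega) le_rfl (fun j => i j.castSucc) γ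
              * V m (by omega) le_rfl γ (fun _ => i (Fin.last m)) := by
        intro β
        rw [Qpart_succ r G m le_rfl i β]
        refine Finset.sum_congr rfl fun γ _ => ?_
        rw [hinv m (by omega) le_rfl, hGm]
      simp only [hpeel]
      rw [Finset.sum_const, Finset.card_univ, Fintype.card_fin, hrd, one_smul]
      have hAm := hUV m (by omega) le_rfl
      have happ := congrFun (congrFun hAm.symm (fun j => i j.castSucc))
        (fun _ => i (Fin.last m))
      rw [Matrix.mul_apply] at happ
      rw [happ]
      show F _ = F i
      refine congrArg F (funext fun mm => ?_)
      by_cases h : (mm : ℕ) < m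
      · rw [dif_pos h]; exact congrArg i (Fin.ext rfl)
      · rw [dif_neg h]; exact congrArg i (Fin.ext (by simp only [Fin.val_last, Fin.val_mk']; omega))
end
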